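/- arXiv:0706.3608 — 3 statements merged into one kernel-verified Lean document; each statement's English description precedes it below -/
import Mathlib

section
/- Conversely, if f is holomorphic on a connected open set with f' nonvanishing and S(f) = 0 identically, then f is the restriction of a Möbius transformation, i.e. f(z) = (az+b)/(cz+d) for some a,b,c,d ∈ ℂ with ad-bc ≠ 0. -/
open Complex

/-- The Schwarzian derivative `S(f) = (f''/f')' - (1/2)(f''/f')²`. -/
noncomputable def schwarzian (f : ℂ → ℂ) : ℂ → ℂ :=
  fun z => deriv (fun w => deriv (deriv f) w / deriv f w) z
    - (1/2) * (deriv (deriv f) z / deriv f z)^2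

/-- A function with vanishing derivative on an open preconnected set is constant there. -/
lemma aux_const_of_hasDerivAt_zero {U : Set ℂ} (hU : IsOpen U) (hc : IsPreconnected U)
    {g : ℂ → ℂ} (hg : ∀ z ∈ U, HasDerivAt g 0 z) {x : ℂ} (hx : x ∈ U) :
    ∀ z ∈ U, g z = g x := by
  set u : Set ℂ := {z | z ∈ U ∧ g z = g x} with hu_def
  set v : Set ℂ := {z | z ∈ U ∧ g z ≠ g x} with hv_def
  have hcont : ContinuousOn g U := fun z hz =>
    ((hg z hz).differentiableAt.continuousAt).continuousWithinAt
  have key : ∀ z1 ∈ U, ∀ᶠ w in nhds z1, g w = g z1 := by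
    intro z1 hz1
    obtain ⟨r, hr, hball⟩ := Metric.isOpen_iff.1 hU z1 hz1
    have hconst : ∀ w ∈ Metric.ball z1 r, g w = g z1 := by
      intro w hw
      refine (convex_ball z1 r).is_const_of_fderivWithin_eq_zero
        (fun z hz => ((hg z (hball hz)).differentiableAt).differentiableWithinAt)
        (fun z hz => ?_) hw (Metric.mem_ball_self hr)
      rw [fderivWithin_of_isOpen Metric.isOpen_ball hz]
      have h0 : (ContinuousLinearMap.smulRight (1 : ℂ →L[ℂ] ℂ) (0 : ℂ)) = 0 := by
        ext1; simp
      exact h0 ▸ (hg z (hball hz)).hasFDerivAt.fderiv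
    filter_upwards [Metric.ball_mem_nhds z1 hr] using hconst
  have hu_open : IsOpen u := by
    rw [isOpen_iff_mem_nhds]
    intro z1 hz1
    obtain ⟨hz1U, hz1e⟩ := hz1
    have h1 := key z1 hz1U
    have h2 : U ∈ nhds z1 := hU.mem_nhds hz1U
    filter_upwards [h1, h2] with w hw hwU
    exact ⟨hwU, hw.trans hz1e⟩
  have hv_open : IsOpen v := by
    have h := hcont.isOpen_inter_preimage hU
      (isOpen_ne_fun continuous_id (continuous_const (y := g x)))
    have : v = U ∩ (g ⁻¹' {y | y ≠ g x}) := by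
      ext z
      simp only [hv_def, Set.mem_setOf_eq, Set.mem_inter_iff, Set.mem_preimage]
    rw [this]
    exact h
  intro z hz
  by_contra hne
  have hsub : U ⊆ u ∪ v := by
    intro w hw
    by_cases h : g w = g x
    · exact Or.inl ⟨hw, h⟩
    · exact Or.inr ⟨hw, h⟩
  have hdisj : Disjoint u v := by
    rw [Set.disjoint_iff]
    rintro w ⟨⟨_, h1⟩, ⟨_, h2⟩⟩
    exact h2 h1
  have := hc.subset_left_of_subset_union hu_open hv_open hdisj hsub ⟨x, hx, ⟨hx, rfl⟩⟩
  exact hne (this hz).2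

/-- Clopen argument: a continuous function that vanishes locally-persistently and vanishes at one
point of an open preconnected set vanishes identically. -/
lemma aux_clopen {U : Set ℂ} (hU : IsOpen U) (hc : IsPreconnected U) {g : ℂ → ℂ}
    (hcont : ContinuousOn g U)
    (hloc : ∀ z ∈ U, g z = 0 → ∀ᶠ w in nhds z, g w = 0)
    {z0 : ℂ} (hz0 : z0 ∈ U) (h0 : g z0 = 0) : ∀ z ∈ U, g z = 0 := by
  set u : Set ℂ := {z | z ∈ U ∧ ∀ᶠ w in nhds z, g w = 0} with hu_def
  set v : Set ℂ := {z | z ∈ U ∧ g z ≠ 0} with hv_def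
  have hu_open : IsOpen u := by
    rw [isOpen_iff_mem_nhds]
    intro z hz
    obtain ⟨hzU, hev⟩ := hz
    filter_upwards [eventually_eventually_nhds.2 hev, hU.mem_nhds hzU] with w h1 h2
    exact ⟨h2, h1⟩
  have hv_open : IsOpen v := by
    have h := hcont.isOpen_inter_preimage hU
      (isOpen_ne_fun continuous_id (continuous_const (y := (0 : ℂ))))
    have : v = U ∩ (g ⁻¹' {y | y ≠ 0}) := by
      ext z
      simp only [hv_def, Set.mem_setOf_eq, Set.mem_inter_iff, Set.mem_preimage]
    rw [this]
    exact h
  have hdisj : Disjoint u v := by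
    rw [Set.disjoint_iff]
    rintro w ⟨⟨_, h1⟩, ⟨_, h2⟩⟩
    exact (h2 h1.self_of_nhds).elim
  have hsub : U ⊆ u ∪ v := by
    intro w hw
    by_cases h : g w = 0
    · exact Or.inl ⟨hw, hloc w hw h⟩
    · exact Or.inr ⟨hw, h⟩
  have hU_sub : U ⊆ u :=
    hc.subset_left_of_subset_union hu_open hv_open hdisj hsub ⟨z0, hz0, ⟨hz0, hloc z0 hz0 h0⟩⟩
  intro z hz
  exact (hU_sub hz).2.self_of_nhds

/-- Uniqueness for the linear ODE `g' = (F'/F)/2 · g` on an open preconnected set: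
a solution vanishing at a point vanishes identically. -/
lemma aux_zero_of_ode {U : Set ℂ} (hU : IsOpen U) (hc : IsPreconnected U)
    {F F' g : ℂ → ℂ}
    (hF : ∀ z ∈ U, HasDerivAt F (F' z) z)
    (hFne : ∀ z ∈ U, F z ≠ 0)
    (hg : ∀ z ∈ U, HasDerivAt g (F' z / F z / 2 * g z) z)
    {z0 : ℂ} (hz0 : z0 ∈ U) (h0 : g z0 = 0) :
    ∀ z ∈ U, g z = 0 := by
  have hcont : ContinuousOn g U := fun z hz =>
    ((hg z hz).differentiableAt.continuousAt).continuousWithinAt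
  refine aux_clopen hU hc hcont ?_ hz0 h0
  intro z1 hz1 hgz1
  -- local vanishing via a primitive of F'/F on a small ball
  have hFcont : ContinuousOn F U := fun z hz =>
    ((hF z hz).differentiableAt.continuousAt).continuousWithinAt
  have hWopen : IsOpen (U ∩ (fun z => F z / F z1) ⁻¹' slitPlane) :=
    (hFcont.div_const _).isOpen_inter_preimage hU isOpen_slitPlane
  have hz1W : z1 ∈ U ∩ (fun z => F z / F z1) ⁻¹' slitPlane := by
    refine ⟨hz1, ?_⟩
    simp only [Set.mem_preimage, div_self (hFne z1 hz1)]
    exact one_mem_slitPlane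
  obtain ⟨r, hr, hball⟩ := Metric.isOpen_iff.1 hWopen z1 hz1W
  set E : ℂ → ℂ := fun z => g z * Complex.exp (-(Complex.log (F z / F z1)) / 2) with hE_def
  have hEderiv : ∀ z ∈ Metric.ball z1 r, HasDerivAt E 0 z := by
    intro z hz
    obtain ⟨hzU, hzslit⟩ := hball hz
    have hP : HasDerivAt (fun w => Complex.log (F w / F z1))
        ((F' z / F z1) / (F z / F z1)) z := ((hF z hzU).div_const (F z1)).clog hzslit
    have hne1 : F z1 ≠ 0 := hFne z1 hz1
    have hne2 : F z ≠ 0 := hFne z hzU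
    have hPval : (F' z / F z1) / (F z / F z1) = F' z / F z := by
      field_simp
    rw [hPval] at hP
    have hexp : HasDerivAt (fun w => Complex.exp (-(Complex.log (F w / F z1)) / 2))
        (Complex.exp (-(Complex.log (F z / F z1)) / 2) * (-(F' z / F z) / 2)) z :=
      ((hP.neg).div_const 2).cexp
    have hmul := (hg z hzU).mul hexp
    convert hmul using 1
    all_goals first | rfl | ring
  have hEzero : ∀ z ∈ Metric.ball z1 r, E z = 0 := by
    intro z hz
    have := aux_const_of_hasDerivAt_zero Metric.isOpen_ball
      (convex_ball z1 r).isPreconnected hEderiv (Metric.mem_ball_self hr) z hz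
    rw [this, hE_def]
    simp [hgz1]
  filter_upwards [Metric.ball_mem_nhds z1 hr] with w hw
  have := hEzero w hw
  rw [hE_def] at this
  simp only at this
  rcases mul_eq_zero.1 this with h | h
  · exact h
  · exact (Complex.exp_ne_zero _ h).elim

/-- If `f` is holomorphic with nonvanishing derivative on a connected open set and
`S(f) = 0` identically, then `f` is the restriction of a Möbius transformation. -/
theorem schwarzian_eq_zero_iff_moebius (U : Set ℂ) (hU : IsOpen U) (hconn : IsConnected U)
    (f : ℂ → ℂ) (hf : DifferentiableOn ℂ f U) (hf' : ∀ z ∈ U, deriv f z ≠ 0)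
    (hS : ∀ z ∈ U, schwarzian f z = 0) :
    ∃ a b c d : ℂ, a * d - b * c ≠ 0 ∧
      ∀ z ∈ U, c * z + d ≠ 0 ∧ f z = (a * z + b) / (c * z + d) := by
  obtain ⟨z0, hz0⟩ := hconn.nonempty
  have hpc : IsPreconnected U := hconn.isPreconnected
  set q : ℂ → ℂ := fun w => deriv (deriv f) w / deriv f w with hq_def
  have hAn : AnalyticOnNhd ℂ f U := hf.analyticOnNhd hU
  have hF : AnalyticOnNhd ℂ (deriv f) U := hAn.deriv
  have hF2 : AnalyticOnNhd ℂ (deriv (deriv f)) U := hF.deriv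
  have hFd : ∀ z ∈ U, HasDerivAt (deriv f) (deriv (deriv f) z) z := fun z hz =>
    ((hF z hz).differentiableAt).hasDerivAt
  have hqdiff : ∀ z ∈ U, DifferentiableAt ℂ q z := by
    intro z hz
    rw [hq_def]
    exact ((hF2 z hz).differentiableAt).div (hF z hz).differentiableAt (hf' z hz)
  have hS' : ∀ z ∈ U, deriv q z = q z ^ 2 / 2 := by
    intro z hz
    have h2 := hS z hz
    simp only [schwarzian] at h2
    rw [hq_def]
    simp only
    linear_combination h2
  have hqd : ∀ z ∈ U, HasDerivAt q (q z ^ 2 / 2) z := by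
    intro z hz
    have h1 := (hqdiff z hz).hasDerivAt
    rwa [hS' z hz] at h1
  -- the auxiliary solution γ of the linear ODE y' = (q/2) y vanishing at z0
  have hγd : ∀ z ∈ U, HasDerivAt
      (fun w => q z0 * (w * q w + 2) - (z0 * q z0 + 2) * q w)
      (q z / 2 * (q z0 * (z * q z + 2) - (z0 * q z0 + 2) * q z)) z := by
    intro z hz
    have hmul : HasDerivAt (fun w => w * q w) (1 * q z + z * (q z ^ 2 / 2)) z :=
      (hasDerivAt_id z).mul (hqd z hz)
    have h := ((hmul.add_const 2).const_mul (q z0)).sub ((hqd z hz).const_mul (z0 * q z0 + 2))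
    convert h using 1
    all_goals first | rfl | ring
  have hγ0 : ∀ z ∈ U,
      q z0 * (z * q z + 2) - (z0 * q z0 + 2) * q z = 0 := by
    refine aux_zero_of_ode hU hpc hFd hf' ?_ hz0 (by ring)
    intro z hz
    have h := hγd z hz
    rw [hq_def] at h
    exact h
  by_cases hc0 : q z0 = 0
  -- Case 1 : q ≡ 0, f is affine
  · have hq0 : ∀ z ∈ U, q z = 0 := by
      intro z hz
      have h := hγ0 z hz
      rw [hc0] at h
      have h2 : (2 : ℂ) * q z = 0 := by linear_combination -h
      have := mul_eq_zero.1 h2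
      simpa using this
    have hF2z : ∀ z ∈ U, deriv (deriv f) z = 0 := by
      intro z hz
      have h := hq0 z hz
      rw [hq_def] at h
      simp only at h
      rcases div_eq_zero_iff.1 h with h' | h'
      · exact h'
      · exact (hf' z hz h').elim
    have hFconst : ∀ z ∈ U, deriv f z = deriv f z0 := by
      refine aux_const_of_hasDerivAt_zero hU hpc ?_ hz0
      intro z hz
      have h := hFd z hz
      rwa [hF2z z hz] at h
    have hfd : ∀ z ∈ U, HasDerivAt (fun w => f w - deriv f z0 * w) 0 z := by
      intro z hz
      have h1 := ((hAn z hz).differentiableAt).hasDerivAt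
      have h2 := h1.sub ((hasDerivAt_id z).const_mul (deriv f z0))
      have h3 : deriv f z - deriv f z0 * 1 = 0 := by
        rw [hFconst z hz]; ring
      rwa [h3] at h2
    have hfin : ∀ z ∈ U, f z - deriv f z0 * z = f z0 - deriv f z0 * z0 :=
      aux_const_of_hasDerivAt_zero hU hpc hfd hz0
    refine ⟨deriv f z0, f z0 - deriv f z0 * z0, 0, 1, ?_, fun z hz => ⟨by simp, ?_⟩⟩
    · simpa using hf' z0 hz0
    · have h := hfin z hz
      simp only [zero_mul, zero_add, div_one]
      linear_combination h
  -- Case 2 : q = -2c/(cz+d), f is a genuine Möbius map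
  · set c : ℂ := q z0 with hc_def
    clear_value c
    set d : ℂ := -(z0 * c + 2) with hd_def
    clear_value d
    have hu : ∀ z ∈ U, q z * (c * z + d) = -2 * c := by
      intro z hz
      have h := hγ0 z hz
      rw [hd_def]
      linear_combination h
    have hune : ∀ z ∈ U, c * z + d ≠ 0 := by
      intro z hz h
      have h2 := hu z hz
      rw [h, mul_zero] at h2
      exact hc0 (by linear_combination h2 / 2)
    have hF2u : ∀ z ∈ U, deriv (deriv f) z * (c * z + d) = -2 * c * deriv f z := by
      intro z hz
      have hF2eq : deriv (deriv f) z = q z * deriv f z := by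
        rw [hq_def]
        exact (div_mul_cancel₀ _ (hf' z hz)).symm
      rw [hF2eq]
      linear_combination deriv f z * hu z hz
    have hGd : ∀ z ∈ U, HasDerivAt (fun w => deriv f w * (c * w + d) ^ 2) 0 z := by
      intro z hz
      have h1 : HasDerivAt (fun w => c * w + d) c z := by
        simpa using ((hasDerivAt_id z).const_mul c).add_const d
      have h2 : HasDerivAt (fun w => (c * w + d) ^ 2) (2 * (c * z + d) * c) z := by
        have := h1.fun_pow 2
        simpa using this
      have h3 := (hFd z hz).fun_mul h2
      convert h3 using 1
      all_goals first | rfl | linear_combination -(c * z + d) * hF2u z hz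
    have hAne : deriv f z0 * (c * z0 + d) ^ 2 ≠ 0 :=
      mul_ne_zero (hf' z0 hz0) (pow_ne_zero 2 (hune z0 hz0))
    have hG : ∀ z ∈ U, deriv f z * (c * z + d) ^ 2 = deriv f z0 * (c * z0 + d) ^ 2 :=
      aux_const_of_hasDerivAt_zero hU hpc hGd hz0
    set A : ℂ := deriv f z0 * (c * z0 + d) ^ 2 with hA_def
    clear_value A
    have hHd : ∀ z ∈ U, HasDerivAt (fun w => f w + A / (c * (c * w + d))) 0 z := by
      intro z hz
      have h1 : HasDerivAt (fun w => c * (c * w + d)) (c * c) z := by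
        have := (((hasDerivAt_id z).const_mul c).add_const d).const_mul c
        simpa using this
      have hne : c * (c * z + d) ≠ 0 := mul_ne_zero hc0 (hune z hz)
      have h2 : HasDerivAt (fun w => (c * (c * w + d))⁻¹)
          (-(c * c) / (c * (c * z + d)) ^ 2) z := h1.inv hne
      have h3 : HasDerivAt (fun w => A / (c * (c * w + d)))
          (A * (-(c * c) / (c * (c * z + d)) ^ 2)) z := by
        simpa [div_eq_mul_inv] using h2.const_mul A
      have h4 := ((hAn z hz).differentiableAt).hasDerivAt.fun_add h3
      convert h4 using 1 <;> try rfl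
      have hGz := hG z hz
      have hcz := hune z hz
      have key : A * (-(c * c) / (c * (c * z + d)) ^ 2) = -deriv f z := by
        rw [← hGz]
        field_simp
      rw [key]
      ring
    have hH : ∀ z ∈ U, f z + A / (c * (c * z + d)) = f z0 + A / (c * (c * z0 + d)) :=
      aux_const_of_hasDerivAt_zero hU hpc hHd hz0
    set B : ℂ := f z0 + A / (c * (c * z0 + d)) with hB_def
    clear_value B
    refine ⟨B * c ^ 2, B * c * d - A, c ^ 2, c * d, ?_, fun z hz => ⟨?_, ?_⟩⟩
    · have h : B * c ^ 2 * (c * d) - (B * c * d - A) * c ^ 2 = A * c ^ 2 := by ring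
      rw [h]
      exact mul_ne_zero hAne (pow_ne_zero 2 hc0)
    · have h : c ^ 2 * z + c * d = c * (c * z + d) := by ring
      rw [h]
      exact mul_ne_zero hc0 (hune z hz)
    · have hz' := hH z hz
      have hne : c * (c * z + d) ≠ 0 := mul_ne_zero hc0 (hune z hz)
      have hz2 : f z * (c * (c * z + d)) + A = B * (c * (c * z + d)) := by
        rw [← hz', add_mul, div_mul_cancel₀ _ hne]
      have hden : c ^ 2 * z + c * d ≠ 0 := by
        have h : c ^ 2 * z + c * d = c * (c * z + d) := by ring
        rw [h]; exact hne
      rw [eq_div_iff hden]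
      linear_combination hz2
end

section
/- Two holomorphic functions f and g on a connected open set, both with nonvanishing derivative, satisfy S(f) = S(g) if and only if g = φ ∘ f for some Möbius transformation φ. -/
open Complex Filter Set Metric Topology

/-- A function with vanishing derivative on an open convex set is constant there. -/
lemma constOn_of_deriv_eq_zero {s : Set ℂ} (hs : IsOpen s) (hc : Convex ℝ s) {F : ℂ → ℂ}
    (hF : ∀ z ∈ s, HasDerivAt F 0 z) {x y : ℂ} (hx : x ∈ s) (hy : y ∈ s) : F x = F y := by
  apply hc.is_const_of_fderivWithin_eq_zero (𝕜 := ℂ)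
    (fun z hz => (hF z hz).differentiableAt.differentiableWithinAt) _ hx hy
  intro w hw
  rw [fderivWithin_of_isOpen hs hw]
  have := (hF w hw).hasFDerivAt.fderiv
  rw [this]; ext v; simp

/-- If `g` is a Möbius transform of `f` on an open subset of a connected open set where both
are analytic, the relation propagates to the whole set. -/
lemma global_moebius {U : Set ℂ} (hconn : IsPreconnected U) {f g : ℂ → ℂ}
    (Af : AnalyticOnNhd ℂ f U) (Ag : AnalyticOnNhd ℂ g U) {a b c d : ℂ}
    (hdet : a * d - b * c ≠ 0) {V : Set ℂ} (hV : IsOpen V) {z₁ : ℂ} (hz₁ : z₁ ∈ V)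
    (hVU : V ⊆ U) (hloc : ∀ z ∈ V, c * f z + d ≠ 0 ∧ g z = (a * f z + b) / (c * f z + d)) :
    ∀ z ∈ U, c * f z + d ≠ 0 ∧ g z = (a * f z + b) / (c * f z + d) := by
  set h : ℂ → ℂ := fun z => (c * f z + d) * g z - (a * f z + b) with hh
  have Ah : AnalyticOnNhd ℂ h U :=
    (((analyticOnNhd_const.mul Af).add analyticOnNhd_const).mul Ag).sub
      ((analyticOnNhd_const.mul Af).add analyticOnNhd_const)
  have hev : h =ᶠ[𝓝 z₁] 0 := by
    filter_upwards [hV.mem_nhds hz₁] with w hw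
    obtain ⟨h1, h2⟩ := hloc w hw
    simp only [hh, Pi.zero_apply]
    rw [h2]
    field_simp
    ring
  have hzero := Ah.eqOn_zero_of_preconnected_of_eventuallyEq_zero hconn (hVU hz₁) hev
  intro z hz
  have hz0 : (c * f z + d) * g z = a * f z + b := by
    have := hzero hz
    simp only [hh, Pi.zero_apply] at this
    linear_combination this
  have hne : c * f z + d ≠ 0 := by
    intro hc0
    apply hdet
    have hb : a * f z + b = 0 := by rw [← hz0, hc0, zero_mul]
    have : a * d - b * c = a * (c * f z + d) - (a * f z + b) * c := by ring
    rw [this, hc0, hb]; ring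
  exact ⟨hne, by rw [eq_div_iff hne]; linear_combination hz0⟩

/-- The Schwarzian derivative is invariant under postcomposition by a Möbius transformation. -/
lemma schwarzian_of_moebius {U : Set ℂ} (hU : IsOpen U) {f g : ℂ → ℂ}
    (Af : AnalyticOnNhd ℂ f U) {a b c d : ℂ} (hdet : a * d - b * c ≠ 0)
    (hf' : ∀ z ∈ U, deriv f z ≠ 0)
    (hmo : ∀ z ∈ U, c * f z + d ≠ 0 ∧ g z = (a * f z + b) / (c * f z + d)) :
    ∀ z ∈ U, schwarzian f z = schwarzian g z := by
  have hF1 : ∀ z ∈ U, HasDerivAt f (deriv f z) z :=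
    fun z hz => (Af z hz).differentiableAt.hasDerivAt
  have Af1 : AnalyticOnNhd ℂ (deriv f) U := Af.deriv
  have Af2 : AnalyticOnNhd ℂ (deriv (deriv f)) U := Af1.deriv
  have hF2 : ∀ z ∈ U, HasDerivAt (deriv f) (deriv (deriv f) z) z :=
    fun z hz => (Af1 z hz).differentiableAt.hasDerivAt
  have hF3 : ∀ z ∈ U, HasDerivAt (deriv (deriv f)) (deriv (deriv (deriv f)) z) z :=
    fun z hz => (Af2 z hz).differentiableAt.hasDerivAt
  have hg1 : ∀ w ∈ U, deriv g w = (a * d - b * c) * deriv f w / (c * f w + d) ^ 2 := by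
    intro w hw
    have hev : g =ᶠ[𝓝 w] fun x => (a * f x + b) / (c * f x + d) := by
      filter_upwards [hU.mem_nhds hw] with x hx; exact (hmo x hx).2
    rw [hev.deriv_eq]
    have hnum : HasDerivAt (fun x => a * f x + b) (a * deriv f w) w :=
      ((hF1 w hw).const_mul a).add_const b
    have hden : HasDerivAt (fun x => c * f x + d) (c * deriv f w) w :=
      ((hF1 w hw).const_mul c).add_const d
    rw [(hnum.fun_div hden (hmo w hw).1).deriv]
    field_simp [(hmo w hw).1]
    ring
  have hg2 : ∀ w ∈ U, deriv (deriv g) w =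
      (a * d - b * c) * (deriv (deriv f) w * (c * f w + d) - 2 * c * (deriv f w) ^ 2)
        / (c * f w + d) ^ 3 := by
    intro w hw
    have hev : deriv g =ᶠ[𝓝 w] fun x => (a * d - b * c) * deriv f x / (c * f x + d) ^ 2 := by
      filter_upwards [hU.mem_nhds hw] with x hx; exact hg1 x hx
    rw [hev.deriv_eq]
    have hnum : HasDerivAt (fun x => (a * d - b * c) * deriv f x)
        ((a * d - b * c) * deriv (deriv f) w) w := (hF2 w hw).const_mul _
    have hden : HasDerivAt (fun x => (c * f x + d) ^ 2)
        ((2 : ℕ) * (c * f w + d) ^ 1 * (c * deriv f w)) w :=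
      (((hF1 w hw).const_mul c).add_const d).fun_pow 2
    rw [(hnum.fun_div hden (pow_ne_zero _ (hmo w hw).1)).deriv]
    field_simp [(hmo w hw).1]
    ring
  have hQ : ∀ w ∈ U, deriv (deriv g) w / deriv g w =
      deriv (deriv f) w / deriv f w - 2 * c * deriv f w / (c * f w + d) := by
    intro w hw
    rw [hg1 w hw, hg2 w hw]
    field_simp [hf' w hw, (hmo w hw).1, hdet]
  intro z hz
  have hev : (fun w => deriv (deriv g) w / deriv g w) =ᶠ[𝓝 z]
      fun w => deriv (deriv f) w / deriv f w - 2 * c * deriv f w / (c * f w + d) := by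
    filter_upwards [hU.mem_nhds hz] with w hw; exact hQ w hw
  have h1 : HasDerivAt (fun w => deriv (deriv f) w / deriv f w)
      ((deriv (deriv (deriv f)) z * deriv f z - deriv (deriv f) z * deriv (deriv f) z)
        / (deriv f z) ^ 2) z := (hF3 z hz).fun_div (hF2 z hz) (hf' z hz)
  have h2 : HasDerivAt (fun w => 2 * c * deriv f w / (c * f w + d))
      ((2 * c * deriv (deriv f) z * (c * f z + d) - 2 * c * deriv f z * (c * deriv f z))
        / (c * f z + d) ^ 2) z :=
    ((hF2 z hz).const_mul (2 * c)).fun_div (((hF1 z hz).const_mul c).add_const d) (hmo z hz).1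
  simp only [schwarzian]
  rw [hev.deriv_eq, (h1.fun_sub h2).deriv, h1.deriv, hQ z hz]
  field_simp [hf' z hz, (hmo z hz).1]
  ring

/-- Local solution: equal Schwarzians imply a Möbius relation on some open subset. -/
lemma local_moebius_exists {U : Set ℂ} (hU : IsOpen U) {z₀ : ℂ} (hz₀ : z₀ ∈ U) {f g : ℂ → ℂ}
    (Af : AnalyticOnNhd ℂ f U) (Ag : AnalyticOnNhd ℂ g U)
    (hf' : ∀ z ∈ U, deriv f z ≠ 0) (hg' : ∀ z ∈ U, deriv g z ≠ 0)
    (hS : ∀ z ∈ U, schwarzian f z = schwarzian g z) :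
    ∃ a b c d : ℂ, a * d - b * c ≠ 0 ∧ ∃ V : Set ℂ, IsOpen V ∧ ∃ z₁, z₁ ∈ V ∧ V ⊆ U ∧
      ∀ z ∈ V, c * f z + d ≠ 0 ∧ g z = (a * f z + b) / (c * f z + d) := by
  have Af1 := Af.deriv
  have Af2 := Af1.deriv
  have Ag1 := Ag.deriv
  have Ag2 := Ag1.deriv
  have hf0 : ∀ z ∈ U, HasDerivAt f (deriv f z) z :=
    fun z hz => (Af z hz).differentiableAt.hasDerivAt
  have hf1 : ∀ z ∈ U, HasDerivAt (deriv f) (deriv (deriv f) z) z :=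
    fun z hz => (Af1 z hz).differentiableAt.hasDerivAt
  have hf2 : ∀ z ∈ U, HasDerivAt (deriv (deriv f)) (deriv (deriv (deriv f)) z) z :=
    fun z hz => (Af2 z hz).differentiableAt.hasDerivAt
  have hg0 : ∀ z ∈ U, HasDerivAt g (deriv g z) z :=
    fun z hz => (Ag z hz).differentiableAt.hasDerivAt
  have hg1 : ∀ z ∈ U, HasDerivAt (deriv g) (deriv (deriv g) z) z :=
    fun z hz => (Ag1 z hz).differentiableAt.hasDerivAt
  have hg2 : ∀ z ∈ U, HasDerivAt (deriv (deriv g)) (deriv (deriv (deriv g)) z) z :=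
    fun z hz => (Ag2 z hz).differentiableAt.hasDerivAt
  set p : ℂ → ℂ := fun w => deriv (deriv g) w / deriv g w - deriv (deriv f) w / deriv f w
    with hp_def
  -- the ODE satisfied by p
  have hpd : ∀ z ∈ U, HasDerivAt p
      (1/2 * p z ^ 2 + p z * (deriv (deriv f) z / deriv f z)) z := by
    intro z hz
    have hq := (hg2 z hz).fun_div (hg1 z hz) (hg' z hz)
    have hpf := (hf2 z hz).fun_div (hf1 z hz) (hf' z hz)
    have h := hq.fun_sub hpf
    have hs := hS z hz
    simp only [schwarzian] at hs
    rw [hpf.deriv, hq.deriv] at hs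
    convert h using 1 <;> try rfl
    simp only [hp_def]
    linear_combination hs
  have hpan : ∀ z ∈ U, AnalyticAt ℂ p z := fun z hz =>
    ((Ag2 z hz).div (Ag1 z hz) (hg' z hz)).sub ((Af2 z hz).div (Af1 z hz) (hf' z hz))
  rcases (hpan z₀ hz₀).eventually_eq_zero_or_eventually_ne_zero with hcase | hcase
  · -- case p ≡ 0 near z₀ : g is affine in f
    obtain ⟨ε, hε, hb⟩ := Metric.eventually_nhds_iff.mp (hcase.and (hU.eventually_mem hz₀))
    set V := ball z₀ ε with hV_def
    have hVU : V ⊆ U := fun w hw => (hb (mem_ball.mp hw)).2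
    have hpV : ∀ z ∈ V, p z = 0 := fun w hw => (hb (mem_ball.mp hw)).1
    have hz₀V : z₀ ∈ V := mem_ball_self hε
    have hkey : ∀ z ∈ V, deriv (deriv g) z * deriv f z = deriv (deriv f) z * deriv g z := by
      intro z hz
      have h := hpV z hz
      simp only [hp_def] at h
      rw [sub_eq_zero] at h
      field_simp [hf' z (hVU hz), hg' z (hVU hz)] at h
      linear_combination h
    have hqd : ∀ z ∈ V, HasDerivAt (fun w => deriv g w / deriv f w) 0 z := by
      intro z hz
      have h := (hg1 z (hVU hz)).fun_div (hf1 z (hVU hz)) (hf' z (hVU hz))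
      convert h using 1 <;> try rfl
      rw [eq_comm, div_eq_zero_iff]
      left
      linear_combination hkey z hz
    set γ := deriv g z₀ / deriv f z₀ with hγ_def
    have hγ : γ ≠ 0 := div_ne_zero (hg' z₀ hz₀) (hf' z₀ hz₀)
    have hgf : ∀ z ∈ V, deriv g z = γ * deriv f z := by
      intro z hz
      have h2 := constOn_of_deriv_eq_zero isOpen_ball (convex_ball _ _) hqd hz hz₀V
      rw [hγ_def]
      rw [div_eq_iff (hf' z (hVU hz))] at h2
      linear_combination h2
    have hrd : ∀ z ∈ V, HasDerivAt (fun w => g w - γ * f w) 0 z := by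
      intro z hz
      have h := (hg0 z (hVU hz)).sub ((hf0 z (hVU hz)).const_mul γ)
      convert h using 1 <;> try rfl
      rw [hgf z hz]; ring
    refine ⟨γ, g z₀ - γ * f z₀, 0, 1, by simpa using hγ, V, isOpen_ball, z₀, hz₀V, hVU, ?_⟩
    intro z hz
    refine ⟨by simp, ?_⟩
    have h3 := constOn_of_deriv_eq_zero isOpen_ball (convex_ball _ _) hrd hz hz₀V
    simp only [zero_mul, zero_add, div_one]
    linear_combination h3
  · -- case p ≠ 0 on a punctured neighborhood: find a point z₁ where p ≠ 0
    have hU' : ∀ᶠ w in 𝓝[≠] z₀, w ∈ U := (hU.eventually_mem hz₀).filter_mono nhdsWithin_le_nhds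
    obtain ⟨z₁, hpz₁, hz₁U⟩ := (hcase.and hU').exists
    have hev : ∀ᶠ w in 𝓝 z₁, p w ≠ 0 ∧ w ∈ U :=
      (((hpan z₁ hz₁U).continuousAt).eventually_ne hpz₁).and (hU.eventually_mem hz₁U)
    obtain ⟨ε, hε, hb⟩ := Metric.eventually_nhds_iff.mp hev
    set V := ball z₁ ε with hV_def
    have hz₁V : z₁ ∈ V := mem_ball_self hε
    have hVU : V ⊆ U := fun w hw => (hb (mem_ball.mp hw)).2
    have hpV : ∀ z ∈ V, p z ≠ 0 := fun w hw => (hb (mem_ball.mp hw)).1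
    have hsd : ∀ z ∈ V, HasDerivAt (fun w => -2 * deriv f w / p w - f w) 0 z := by
      intro z hz
      have h := (((hf1 z (hVU hz)).const_mul (-2)).fun_div (hpd z (hVU hz)) (hpV z hz)).sub
        (hf0 z (hVU hz))
      convert h using 1 <;> try rfl
      field_simp [hf' z (hVU hz), hpV z hz]
      ring
    set e := -2 * deriv f z₁ / p z₁ - f z₁ with he_def
    have hte : ∀ z ∈ V, -2 * deriv f z / p z = f z + e := by
      intro z hz
      have h2 := constOn_of_deriv_eq_zero isOpen_ball (convex_ball _ _) hsd hz hz₁V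
      rw [he_def]
      linear_combination h2
    have hfe : ∀ z ∈ V, f z + e ≠ 0 := by
      intro z hz
      rw [← hte z hz]
      exact div_ne_zero (mul_ne_zero (by norm_num) (hf' z (hVU hz))) (hpV z hz)
    have hpe : ∀ z ∈ V, p z * (f z + e) = -2 * deriv f z := by
      intro z hz
      rw [← hte z hz]
      field_simp [hpV z hz]
    have hkey : ∀ z ∈ V, deriv (deriv g) z * deriv f z * (f z + e) =
        deriv g z * (deriv (deriv f) z * (f z + e) - 2 * (deriv f z) ^ 2) := by
      intro z hz
      have h := hpe z hz
      simp only [hp_def] at h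
      field_simp [hg' z (hVU hz), hf' z (hVU hz)] at h
      linear_combination h
    have hqd : ∀ z ∈ V, HasDerivAt (fun w => deriv g w * (f w + e) ^ 2 / deriv f w) 0 z := by
      intro z hz
      have h := ((hg1 z (hVU hz)).fun_mul (((hf0 z (hVU hz)).add_const e).fun_pow 2)).fun_div
        (hf1 z (hVU hz)) (hf' z (hVU hz))
      convert h using 1 <;> try rfl
      rw [eq_comm, div_eq_zero_iff]
      left
      push_cast
      linear_combination (f z + e) * hkey z hz
    set γ := deriv g z₁ * (f z₁ + e) ^ 2 / deriv f z₁ with hγ_def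
    have hγ : γ ≠ 0 := div_ne_zero (mul_ne_zero (hg' z₁ hz₁U) (pow_ne_zero _ (hfe z₁ hz₁V)))
      (hf' z₁ hz₁U)
    have hq : ∀ z ∈ V, deriv g z * (f z + e) ^ 2 = γ * deriv f z := by
      intro z hz
      have h2 := constOn_of_deriv_eq_zero isOpen_ball (convex_ball _ _) hqd hz hz₁V
      rw [hγ_def]
      rw [div_eq_iff (hf' z (hVU hz))] at h2
      linear_combination h2
    have hrd : ∀ z ∈ V, HasDerivAt (fun w => g w + γ / (f w + e)) 0 z := by
      intro z hz
      have h := (hg0 z (hVU hz)).add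
        ((hasDerivAt_const z γ).fun_div ((hf0 z (hVU hz)).add_const e) (hfe z hz))
      convert h using 1 <;> try rfl
      have h2 := hq z hz
      field_simp [hfe z hz]
      linear_combination -h2
    set δ := g z₁ + γ / (f z₁ + e) with hδ_def
    refine ⟨δ, δ * e - γ, 1, e, ?_, V, isOpen_ball, z₁, hz₁V, hVU, ?_⟩
    · have : δ * e - (δ * e - γ) * 1 = γ := by ring
      rw [this]; exact hγ
    intro z hz
    have hne1 : 1 * f z + e ≠ 0 := by rw [one_mul]; exact hfe z hz
    refine ⟨hne1, ?_⟩
    have h3 := constOn_of_deriv_eq_zero isOpen_ball (convex_ball _ _) hrd hz hz₁V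
    rw [← hδ_def] at h3
    rw [eq_div_iff hne1]
    field_simp [hfe z hz] at h3
    linear_combination h3

/-- Two holomorphic functions with nonvanishing derivative on a connected open set
have the same Schwarzian derivative iff they differ by a Möbius transformation. -/
theorem schwarzian_eq_iff_moebius_comp (U : Set ℂ) (hU : IsOpen U) (hconn : IsConnected U)
    (f g : ℂ → ℂ) (hf : DifferentiableOn ℂ f U) (hg : DifferentiableOn ℂ g U)
    (hf' : ∀ z ∈ U, deriv f z ≠ 0) (hg' : ∀ z ∈ U, deriv g z ≠ 0) :
    (∀ z ∈ U, schwarzian f z = schwarzian g z) ↔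
      ∃ a b c d : ℂ, a * d - b * c ≠ 0 ∧
        ∀ z ∈ U, c * f z + d ≠ 0 ∧ g z = (a * f z + b) / (c * f z + d) := by
  have Af : AnalyticOnNhd ℂ f U := hf.analyticOnNhd hU
  have Ag : AnalyticOnNhd ℂ g U := hg.analyticOnNhd hU
  constructor
  · intro hS
    obtain ⟨z₀, hz₀⟩ := hconn.nonempty
    obtain ⟨a, b, c, d, hdet, V, hV, z₁, hz₁, hVU, hloc⟩ :=
      local_moebius_exists hU hz₀ Af Ag hf' hg' hS
    exact ⟨a, b, c, d, hdet,
      global_moebius hconn.isPreconnected Af Ag hdet hV hz₁ hVU hloc⟩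
  · rintro ⟨a, b, c, d, hdet, hmo⟩
    exact schwarzian_of_moebius hU Af hdet hf' hmo
end

section
/- If f is holomorphic with f' nonvanishing and S(f) = φ, then setting z₂ = 1/√(f') and z₁ = f/√(f') (for a local branch of the square root), both z₁ and z₂ solve z'' + (φ/2)z = 0 and f = z₁/z₂. -/
open Complex

private lemma schwarz_alg1 (a b c F : ℂ) (ha : a ≠ 0) :
    ((2 * a * b * a + a ^ 2 * b - (a ^ 2 * b + F * c)) * a ^ 2
        - (a ^ 2 * a - F * b) * (2 * a * b)) / (a ^ 2) ^ 2
      + (((2 * c * a - 2 * b * b) / a ^ 2 - (1/2) * (2 * b / a) ^ 2) / 2) * (F / a) = 0 := by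
  have h : (a:ℂ) * a⁻¹ = 1 := mul_inv_cancel₀ ha
  simp only [div_eq_mul_inv, mul_inv, ← inv_pow, one_mul]
  linear_combination ((2*b^2 - c*a) * F * a⁻¹^3) * h

private lemma schwarz_alg2 (a b c : ℂ) (ha : a ≠ 0) :
    (-c * a ^ 2 + b * (2 * a * b)) / (a ^ 2) ^ 2
      + (((2 * c * a - 2 * b * b) / a ^ 2 - (1/2) * (2 * b / a) ^ 2) / 2) * (1 / a) = 0 := by
  have h : (a:ℂ) * a⁻¹ = 1 := mul_inv_cancel₀ ha
  simp only [div_eq_mul_inv, mul_inv, ← inv_pow, one_mul]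
  linear_combination ((2*b^2 - c*a) * a⁻¹^3) * h

/-- If `f` is holomorphic with nonvanishing derivative on a simply connected open set
and `φ = S(f)`, then for a holomorphic branch `g` of `√(f')`, the functions
`z₁ = f/g` and `z₂ = 1/g` solve `z'' + (φ/2)z = 0` and `f = z₁/z₂`. -/
theorem solutions_from_schwarzian (U : Set ℂ) (hU : IsOpen U)
    (hsc : SimplyConnectedSpace U)
    (f g : ℂ → ℂ) (hf : DifferentiableOn ℂ f U) (hf' : ∀ z ∈ U, deriv f z ≠ 0)
    (hg : DifferentiableOn ℂ g U) (hgsq : ∀ z ∈ U, g z ^ 2 = deriv f z) :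
    ∀ v ∈ U,
      deriv (deriv (fun z => f z / g z)) v
          + (schwarzian f v / 2) * (f v / g v) = 0 ∧
      deriv (deriv (fun z => 1 / g z)) v
          + (schwarzian f v / 2) * (1 / g v) = 0 ∧
      f v = (f v / g v) / (1 / g v) := by
  -- basic facts
  have hga : AnalyticOnNhd ℂ g U := hg.analyticOnNhd hU
  have hdga : AnalyticOnNhd ℂ (deriv g) U := hga.deriv
  have hg0 : ∀ z ∈ U, g z ≠ 0 := by
    intro z hz h
    exact hf' z hz (by rw [← hgsq z hz, h]; ring)
  have hgd : ∀ z ∈ U, DifferentiableAt ℂ g z :=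
    fun z hz => hg.differentiableAt (hU.mem_nhds hz)
  have hfd : ∀ z ∈ U, DifferentiableAt ℂ f z :=
    fun z hz => hf.differentiableAt (hU.mem_nhds hz)
  have hdgd : ∀ z ∈ U, DifferentiableAt ℂ (deriv g) z :=
    fun z hz => (hdga z hz).differentiableAt
  -- f'' = 2 g g'
  have hddf : ∀ z ∈ U, deriv (deriv f) z = 2 * g z * deriv g z := by
    intro z hz
    have h1 : deriv f =ᶠ[nhds z] (fun w => g w ^ 2) :=
      Filter.eventuallyEq_of_mem (hU.mem_nhds hz) (fun w hw => (hgsq w hw).symm)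
    rw [h1.deriv_eq, deriv_fun_pow (hgd z hz) 2]
    ring
  -- first derivative of z₂ = 1/g
  have hz2' : ∀ z ∈ U, deriv (fun w => 1 / g w) z = -deriv g z / g z ^ 2 := by
    intro z hz
    rw [deriv_fun_div (differentiableAt_const 1) (hgd z hz) (hg0 z hz)]
    simp
  -- first derivative of z₁ = f/g
  have hz1' : ∀ z ∈ U,
      deriv (fun w => f w / g w) z = (g z ^ 2 * g z - f z * deriv g z) / g z ^ 2 := by
    intro z hz
    rw [deriv_fun_div (hfd z hz) (hgd z hz) (hg0 z hz), ← hgsq z hz]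
  intro v hv
  set a := g v with ha
  set b := deriv g v with hb
  set c := deriv (deriv g) v with hc
  have ha0 : a ≠ 0 := hg0 v hv
  -- second derivative of z₂
  have hz2'' : deriv (deriv (fun z => 1 / g z)) v
      = (-c * a ^ 2 + b * (2 * a * b)) / (a ^ 2) ^ 2 := by
    have h1 : deriv (fun z => 1 / g z) =ᶠ[nhds v] (fun z => -deriv g z / g z ^ 2) :=
      Filter.eventuallyEq_of_mem (hU.mem_nhds hv) (fun w hw => hz2' w hw)
    rw [h1.deriv_eq, deriv_fun_div ((hdgd v hv).fun_neg) ((hgd v hv).fun_pow 2)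
      (pow_ne_zero 2 ha0), deriv.fun_neg, deriv_fun_pow (hgd v hv) 2]
    simp only [← ha, ← hb, ← hc]
    ring_nf
  -- second derivative of z₁
  have hz1'' : deriv (deriv (fun z => f z / g z)) v
      = ((2 * a * b * a + a ^ 2 * b - (a ^ 2 * b + f v * c)) * a ^ 2
          - (a ^ 2 * a - f v * b) * (2 * a * b)) / (a ^ 2) ^ 2 := by
    have h1 : deriv (fun z => f z / g z) =ᶠ[nhds v]
        (fun z => (g z ^ 2 * g z - f z * deriv g z) / g z ^ 2) :=
      Filter.eventuallyEq_of_mem (hU.mem_nhds hv) (fun w hw => hz1' w hw)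
    rw [h1.deriv_eq]
    have hnum : DifferentiableAt ℂ (fun z => g z ^ 2 * g z - f z * deriv g z) v :=
      (((hgd v hv).fun_pow 2).fun_mul (hgd v hv)).fun_sub ((hfd v hv).fun_mul (hdgd v hv))
    rw [deriv_fun_div hnum ((hgd v hv).fun_pow 2) (pow_ne_zero 2 ha0)]
    have hd1 : deriv (fun z => g z ^ 2 * g z - f z * deriv g z) v
        = (2 * a * b * a + a ^ 2 * b) - (a ^ 2 * b + f v * c) := by
      rw [deriv_fun_sub (((hgd v hv).fun_pow 2).fun_mul (hgd v hv)) ((hfd v hv).fun_mul (hdgd v hv)),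
        deriv_fun_mul ((hgd v hv).fun_pow 2) (hgd v hv),
        deriv_fun_mul (hfd v hv) (hdgd v hv), deriv_fun_pow (hgd v hv) 2]
      have : deriv f v = a ^ 2 := (hgsq v hv).symm
      rw [this]
      simp only [← ha, ← hb, ← hc]
      ring
    rw [hd1, deriv_fun_pow (hgd v hv) 2]
    simp only [← ha, ← hb]
    ring_nf
  -- schwarzian in terms of g
  have hsch : schwarzian f v = (2 * c * a - 2 * b * b) / a ^ 2 - (1/2) * (2 * b / a) ^ 2 := by
    unfold schwarzian
    have h1 : (fun w => deriv (deriv f) w / deriv f w) =ᶠ[nhds v]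
        (fun w => 2 * deriv g w / g w) := by
      refine Filter.eventuallyEq_of_mem (hU.mem_nhds hv) (fun w hw => ?_)
      rw [hddf w hw, ← hgsq w hw]
      field_simp [hg0 w hw]
    rw [h1.deriv_eq, deriv_fun_div ((hdgd v hv).const_mul 2) (hgd v hv) ha0,
      deriv_const_mul 2 (hdgd v hv), hddf v hv, ← hgsq v hv]
    simp only [← ha, ← hb, ← hc]
    field_simp
  refine ⟨?_, ?_, ?_⟩
  · rw [hz1'', hsch]
    exact schwarz_alg1 a b c (f v) ha0
  · rw [hz2'', hsch]
    exact schwarz_alg2 a b c ha0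
  · field_simp
end
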